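/- Third-derivative cascade for I₄: let 0 < E₀ and let Ψ be three times continuously differentiable on [E₀, ∞). Define I₄(E) = 24π ∫_{E₀}^{E} ( √E/√v − 1 ) Ψ(v) v^{−1/2} dv. Then the function z ↦ I₄(z²) is three times differentiable on (√E₀, ∞) and (2/π) (d³/dz³) I₄(z²) = 192 Ψ′(z²) − 96 Ψ(z²)/z². Moreover, the first two derivatives satisfy (2/π)(d/dz) I₄(z²) = 48 ∫_{E₀}^{z²} Ψ(v)/v dv and (2/π)(d²/dz²) I₄(z²) = 96 Ψ(z²)/z. -/

import Mathlib

open Set Real MeasureTheory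

theorem cascade_I4 (E₀ : ℝ) (hE₀ : 0 < E₀)
    (Ψ Ψ' Ψ'' Ψ''' : ℝ → ℝ)
    (h1 : ∀ v ∈ Ici E₀, HasDerivWithinAt Ψ (Ψ' v) (Ici E₀) v)
    (h2 : ∀ v ∈ Ici E₀, HasDerivWithinAt Ψ' (Ψ'' v) (Ici E₀) v)
    (h3 : ∀ v ∈ Ici E₀, HasDerivWithinAt Ψ'' (Ψ''' v) (Ici E₀) v)
    (hc : ContinuousOn Ψ''' (Ici E₀))
    (I₄ : ℝ → ℝ)
    (hI : ∀ e, I₄ e =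
      24 * π * ∫ v in E₀..e, (Real.sqrt e / Real.sqrt v - 1) * Ψ v / Real.sqrt v) :
    (∀ z ∈ Ioi (Real.sqrt E₀),
      DifferentiableAt ℝ (fun z => I₄ (z^2)) z ∧
      DifferentiableAt ℝ (deriv (fun z => I₄ (z^2))) z ∧
      DifferentiableAt ℝ (deriv (deriv (fun z => I₄ (z^2)))) z) ∧
    (∀ z ∈ Ioi (Real.sqrt E₀),
      (2/π) * deriv (deriv (deriv (fun z => I₄ (z^2)))) z =
        192 * Ψ' (z^2) - 96 * Ψ (z^2) / z^2) ∧
    (∀ z ∈ Ioi (Real.sqrt E₀),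
      (2/π) * deriv (fun z => I₄ (z^2)) z = 48 * ∫ v in E₀..z^2, Ψ v / v) ∧
    (∀ z ∈ Ioi (Real.sqrt E₀),
      (2/π) * deriv (deriv (fun z => I₄ (z^2))) z = 96 * Ψ (z^2) / z) := by
  have hπ : (π:ℝ) ≠ 0 := Real.pi_ne_zero
  set s : Set ℝ := Ioi (Real.sqrt E₀) with hsdef
  have hsopen : IsOpen s := isOpen_Ioi
  have hΨc : ContinuousOn Ψ (Ici E₀) := fun v hv => (h1 v hv).continuousWithinAt
  have hz0 : ∀ z ∈ s, 0 < z := fun z hz =>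
    lt_of_le_of_lt (Real.sqrt_nonneg E₀) hz
  have hz2 : ∀ z ∈ s, E₀ < z ^ 2 := by
    intro z hz
    have h := pow_lt_pow_left₀ (show Real.sqrt E₀ < z from hz) (Real.sqrt_nonneg E₀)
      (two_ne_zero)
    rwa [Real.sq_sqrt hE₀.le] at h
  -- integrand pieces
  set f₁ : ℝ → ℝ := fun v => Ψ v / v with hf₁def
  set f₂ : ℝ → ℝ := fun v => Ψ v / Real.sqrt v with hf₂def
  have hf₁c : ContinuousOn f₁ (Ici E₀) := by
    apply hΨc.div continuousOn_id
    intro v hv; exact ne_of_gt (lt_of_lt_of_le hE₀ hv)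
  have hf₂c : ContinuousOn f₂ (Ici E₀) := by
    apply hΨc.div Real.continuous_sqrt.continuousOn
    intro v hv
    exact ne_of_gt (Real.sqrt_pos.mpr (lt_of_lt_of_le hE₀ hv))
  -- FTC helper
  have hFTC : ∀ (f : ℝ → ℝ), ContinuousOn f (Ici E₀) → ∀ E : ℝ, E₀ < E →
      HasDerivAt (fun u => ∫ v in E₀..u, f v) (f E) E := by
    intro f hf E hE
    have hmemI : Ici E₀ ∈ nhds E := Filter.mem_of_superset (isOpen_Ioi.mem_nhds hE) Ioi_subset_Ici_self
    apply intervalIntegral.integral_hasDerivAt_right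
    · apply (hf.mono _).intervalIntegrable
      rw [uIcc_of_le hE.le]
      exact Icc_subset_Ici_self
    · exact ContinuousOn.stronglyMeasurableAtFilter isOpen_Ioi
        (hf.mono Ioi_subset_Ici_self) E hE
    · exact hf.continuousAt hmemI
  -- A and B
  set A : ℝ → ℝ := fun u => ∫ v in E₀..u, f₁ v with hAdef
  set B : ℝ → ℝ := fun u => ∫ v in E₀..u, f₂ v with hBdef
  -- F = G on s
  have hFG : Set.EqOn (fun z => I₄ (z ^ 2))
      (fun z => 24 * π * (z * A (z ^ 2) - B (z ^ 2))) s := by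
    intro z hz
    have h1z : (0:ℝ) < z := hz0 z hz
    have h2z : E₀ < z ^ 2 := hz2 z hz
    simp only [hI]
    have hsq : Real.sqrt (z ^ 2) = z := Real.sqrt_sq h1z.le
    have hsub : Icc E₀ (z ^ 2) ⊆ Ici E₀ := Icc_subset_Ici_self
    have hi1 : IntervalIntegrable (fun v => z * f₁ v) volume E₀ (z ^ 2) := by
      apply ContinuousOn.intervalIntegrable
      rw [uIcc_of_le h2z.le]
      exact (continuousOn_const.mul (hf₁c.mono hsub))
    have hi2 : IntervalIntegrable f₂ volume E₀ (z ^ 2) := by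
      apply ContinuousOn.intervalIntegrable
      rw [uIcc_of_le h2z.le]
      exact hf₂c.mono hsub
    have hint : (∫ v in E₀..z ^ 2,
        (Real.sqrt (z ^ 2) / Real.sqrt v - 1) * Ψ v / Real.sqrt v)
        = ∫ v in E₀..z ^ 2, (z * f₁ v - f₂ v) := by
      apply intervalIntegral.integral_congr
      intro v hv
      rw [uIcc_of_le h2z.le] at hv
      have hvpos : 0 < v := lt_of_lt_of_le hE₀ hv.1
      have hsv : Real.sqrt v * Real.sqrt v = v := Real.mul_self_sqrt hvpos.le
      have hsvne : Real.sqrt v ≠ 0 := ne_of_gt (Real.sqrt_pos.mpr hvpos)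
      simp only [hsq, hf₁def, hf₂def]
      field_simp
      linear_combination (-(z * Ψ v)) * hsv
    rw [hint, intervalIntegral.integral_sub hi1 hi2,
      intervalIntegral.integral_const_mul]
  -- first derivative
  have hDA : ∀ z ∈ s, HasDerivAt (fun z => A (z ^ 2)) (Ψ (z ^ 2) / z ^ 2 * (2 * z)) z := by
    intro z hz
    have hpow : HasDerivAt (fun z : ℝ => z ^ 2) (2 * z) z := by
      simpa using hasDerivAt_pow 2 z
    have := HasDerivAt.comp (h := fun z : ℝ => z ^ 2) z (hFTC f₁ hf₁c (z ^ 2) (hz2 z hz)) hpow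
    exact this
  have hDB : ∀ z ∈ s, HasDerivAt (fun z => B (z ^ 2)) (Ψ (z ^ 2) / z * (2 * z)) z := by
    intro z hz
    have hpow : HasDerivAt (fun z : ℝ => z ^ 2) (2 * z) z := by
      simpa using hasDerivAt_pow 2 z
    have := HasDerivAt.comp (h := fun z : ℝ => z ^ 2) z (hFTC f₂ hf₂c (z ^ 2) (hz2 z hz)) hpow
    have hsq : Real.sqrt (z ^ 2) = z := Real.sqrt_sq (hz0 z hz).le
    rw [show Ψ (z ^ 2) / z * (2 * z) = f₂ (z ^ 2) * (2 * z) by simp only [hf₂def, hsq]]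
    exact this
  have hD1 : ∀ z ∈ s, HasDerivAt (fun z => I₄ (z ^ 2)) (24 * π * A (z ^ 2)) z := by
    intro z hz
    have h1z : (0:ℝ) < z := hz0 z hz
    have hG : HasDerivAt (fun z => 24 * π * (z * A (z ^ 2) - B (z ^ 2)))
        (24 * π * A (z ^ 2)) z := by
      have hprod : HasDerivAt (fun z => z * A (z ^ 2))
          (1 * A (z ^ 2) + z * (Ψ (z ^ 2) / z ^ 2 * (2 * z))) z :=
        (hasDerivAt_id z).mul (hDA z hz)
      have hall := (hprod.sub (hDB z hz)).const_mul (24 * π)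
      refine hall.congr_deriv ?_
      field_simp [h1z.ne']
      ring
    exact hG.congr_of_eventuallyEq
      (Filter.eventuallyEq_of_mem (hsopen.mem_nhds hz) hFG)
  have hE1 : Set.EqOn (deriv (fun z => I₄ (z ^ 2)))
      (fun z => 24 * π * A (z ^ 2)) s := fun z hz => (hD1 z hz).deriv
  -- second derivative
  have hD2 : ∀ z ∈ s, HasDerivAt (deriv (fun z => I₄ (z ^ 2)))
      (48 * π * (Ψ (z ^ 2) / z)) z := by
    intro z hz
    have h1z : (0:ℝ) < z := hz0 z hz
    have hG : HasDerivAt (fun z => 24 * π * A (z ^ 2)) (48 * π * (Ψ (z ^ 2) / z)) z := by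
      have := (hDA z hz).const_mul (24 * π)
      refine this.congr_deriv ?_
      field_simp [h1z.ne']
      ring
    exact hG.congr_of_eventuallyEq
      (Filter.eventuallyEq_of_mem (hsopen.mem_nhds hz) hE1)
  have hE2 : Set.EqOn (deriv (deriv (fun z => I₄ (z ^ 2))))
      (fun z => 48 * π * (Ψ (z ^ 2) / z)) s := fun z hz => (hD2 z hz).deriv
  -- third derivative
  have hD3 : ∀ z ∈ s, HasDerivAt (deriv (deriv (fun z => I₄ (z ^ 2))))
      (48 * π * (2 * Ψ' (z ^ 2) - Ψ (z ^ 2) / z ^ 2)) z := by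
    intro z hz
    have h1z : (0:ℝ) < z := hz0 z hz
    have h2z : E₀ < z ^ 2 := hz2 z hz
    have hΨd : HasDerivAt Ψ (Ψ' (z ^ 2)) (z ^ 2) :=
      (h1 (z ^ 2) h2z.le).hasDerivAt
        (Filter.mem_of_superset (isOpen_Ioi.mem_nhds h2z) Ioi_subset_Ici_self)
    have hcomp : HasDerivAt (fun z => Ψ (z ^ 2)) (Ψ' (z ^ 2) * (2 * z)) z := by
      have hpow : HasDerivAt (fun z : ℝ => z ^ 2) (2 * z) z := by
        simpa using hasDerivAt_pow 2 z
      have := HasDerivAt.comp (h := fun z : ℝ => z ^ 2) z hΨd hpow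
      exact this
    have hdiv : HasDerivAt (fun z => Ψ (z ^ 2) / z)
        ((Ψ' (z ^ 2) * (2 * z) * z - Ψ (z ^ 2) * 1) / z ^ 2) z :=
      hcomp.div (hasDerivAt_id z) h1z.ne'
    have hG : HasDerivAt (fun z => 48 * π * (Ψ (z ^ 2) / z))
        (48 * π * (2 * Ψ' (z ^ 2) - Ψ (z ^ 2) / z ^ 2)) z := by
      have := hdiv.const_mul (48 * π)
      refine this.congr_deriv ?_
      field_simp [h1z.ne']
    exact hG.congr_of_eventuallyEq
      (Filter.eventuallyEq_of_mem (hsopen.mem_nhds hz) hE2)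
  refine ⟨?_, ?_, ?_, ?_⟩
  · intro z hz
    exact ⟨(hD1 z hz).differentiableAt, (hD2 z hz).differentiableAt,
      (hD3 z hz).differentiableAt⟩
  · intro z hz
    have h1z : z ≠ 0 := (hz0 z hz).ne'
    rw [(hD3 z hz).deriv]
    field_simp
    ring
  · intro z hz
    have h1z : z ≠ 0 := (hz0 z hz).ne'
    rw [(hD1 z hz).deriv]
    simp only [hAdef, hf₁def]
    field_simp
    ring
  · intro z hz
    have h1z : z ≠ 0 := (hz0 z hz).ne'
    rw [(hD2 z hz).deriv]
    field_simp
    ring
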